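/- In dimension d, let R₁, …, R_k be dyadic rectangles (products of dyadic intervals) such that for every coordinate t ∈ {1,…,d}, the side lengths |R_{1,t}|, …, |R_{k,t}| are pairwise distinct, and suppose S = ⋂_{j=1}^k R_j is nonempty. Then there exists ε ∈ {±1} with ∏_{j=1}^k h_{R_j} = ε h_S, where h_R(x₁,…,x_d) = ∏_t h_{R_t}(x_t). -/
import Mathlib


open MeasureTheory Set

/-- The dyadic interval `[j·2^k, (j+1)·2^k)`. -/
noncomputable def dyadicI (j k : ℤ) : Set ℝ :=
  Set.Ico ((j : ℝ) * 2 ^ k) (((j : ℝ) + 1) * 2 ^ k)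

/-- The left half of the dyadic interval `[j·2^k, (j+1)·2^k)`. -/
noncomputable def dyadicLeft (j k : ℤ) : Set ℝ :=
  Set.Ico ((j : ℝ) * 2 ^ k) ((j : ℝ) * 2 ^ k + 2 ^ (k - 1))

/-- The right half of the dyadic interval `[j·2^k, (j+1)·2^k)`. -/
noncomputable def dyadicRight (j k : ℤ) : Set ℝ :=
  Set.Ico ((j : ℝ) * 2 ^ k + 2 ^ (k - 1)) (((j : ℝ) + 1) * 2 ^ k)

/-- The `L^∞`-normalized Haar function of the dyadic interval `[j·2^k, (j+1)·2^k)`: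
`h_I = -𝟙_{I_left} + 𝟙_{I_right}`. -/
noncomputable def haar (j k : ℤ) (x : ℝ) : ℝ :=
  - (dyadicLeft j k).indicator (fun _ => (1 : ℝ)) x
  + (dyadicRight j k).indicator (fun _ => (1 : ℝ)) x

lemma two_zpow_pos' (k : ℤ) : (0:ℝ) < 2 ^ k := zpow_pos (by norm_num) k

lemma two_zpow_double (k : ℤ) : (2:ℝ) ^ k = 2 ^ (k-1) * 2 := by
  rw [← zpow_add_one₀ (by norm_num : (2:ℝ) ≠ 0)]
  norm_num

lemma left_union_right (j k : ℤ) : dyadicLeft j k ∪ dyadicRight j k = dyadicI j k := by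
  unfold dyadicLeft dyadicRight dyadicI
  rw [Set.Ico_union_Ico_eq_Ico]
  · linarith [two_zpow_pos' (k-1)]
  · have h2 := two_zpow_double k
    have h1 := two_zpow_pos' (k-1)
    nlinarith

lemma left_right_disjoint (j k : ℤ) : Disjoint (dyadicLeft j k) (dyadicRight j k) := by
  apply Set.disjoint_left.mpr
  rintro x ⟨_, h2⟩ ⟨h3, _⟩
  linarith

lemma haar_of_mem_left {j k : ℤ} {x : ℝ} (h : x ∈ dyadicLeft j k) : haar j k x = -1 := by
  have hr : x ∉ dyadicRight j k := Set.disjoint_left.mp (left_right_disjoint j k) h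
  simp [haar, Set.indicator_of_mem h, Set.indicator_of_notMem hr]

lemma haar_of_mem_right {j k : ℤ} {x : ℝ} (h : x ∈ dyadicRight j k) : haar j k x = 1 := by
  have hl : x ∉ dyadicLeft j k := Set.disjoint_right.mp (left_right_disjoint j k) h
  simp [haar, Set.indicator_of_mem h, Set.indicator_of_notMem hl]

lemma haar_eq_zero {j k : ℤ} {x : ℝ} (hx : x ∉ dyadicI j k) : haar j k x = 0 := by
  have hl : x ∉ dyadicLeft j k := fun h => hx (left_union_right j k ▸ Set.mem_union_left _ h)
  have hr : x ∉ dyadicRight j k := fun h => hx (left_union_right j k ▸ Set.mem_union_right _ h)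
  simp [haar, Set.indicator_of_notMem hl, Set.indicator_of_notMem hr]

lemma dyadicLeft_eq (j k : ℤ) : dyadicLeft j k = dyadicI (2*j) (k-1) := by
  have h2 := two_zpow_double k
  unfold dyadicLeft dyadicI
  have e1 : ((2*j : ℤ):ℝ) * 2^(k-1) = (j:ℝ) * 2^k := by push_cast; linear_combination -(j:ℝ) * h2
  have e2 : (((2*j : ℤ):ℝ) + 1) * 2^(k-1) = (j:ℝ) * 2^k + 2^(k-1) := by
    push_cast; linear_combination -(j:ℝ) * h2
  rw [e1, e2]

lemma dyadicRight_eq (j k : ℤ) : dyadicRight j k = dyadicI (2*j+1) (k-1) := by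
  have h2 := two_zpow_double k
  unfold dyadicRight dyadicI
  have e1 : ((2*j+1 : ℤ):ℝ) * 2^(k-1) = (j:ℝ) * 2^k + 2^(k-1) := by
    push_cast; linear_combination -(j:ℝ) * h2
  have e2 : (((2*j+1 : ℤ):ℝ) + 1) * 2^(k-1) = ((j:ℝ) + 1) * 2^k := by
    push_cast; linear_combination -((j:ℝ) + 1) * h2
  rw [e1, e2]

lemma dyadic_nested {j k j' k' : ℤ} (hk : k ≤ k')
    (h : (dyadicI j k ∩ dyadicI j' k').Nonempty) : dyadicI j k ⊆ dyadicI j' k' := by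
  obtain ⟨x, hx1, hx2⟩ := h
  set n : ℤ := 2 ^ (k' - k).toNat with hn
  have hpow : (2:ℝ) ^ k' = (n : ℝ) * 2 ^ k := by
    rw [hn]
    push_cast
    rw [← zpow_natCast (2:ℝ) (k' - k).toNat, ← zpow_add₀ (by norm_num : (2:ℝ) ≠ 0)]
    congr 1
    omega
  have hkpos := two_zpow_pos' k
  obtain ⟨ha1, ha2⟩ := hx1
  obtain ⟨hb1, hb2⟩ := hx2
  rw [hpow] at hb1 hb2
  -- j' * n < j + 1
  have h1 : (j' : ℝ) * n < (j : ℝ) + 1 := by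
    have : (j' : ℝ) * n * 2 ^ k < ((j : ℝ) + 1) * 2 ^ k := by nlinarith
    exact lt_of_mul_lt_mul_right this hkpos.le
  have h1' : j' * n ≤ j := by exact_mod_cast Int.lt_add_one_iff.mp (by exact_mod_cast h1)
  have h2 : (j : ℝ) < ((j' : ℝ) + 1) * n := by
    have : (j : ℝ) * 2 ^ k < ((j' : ℝ) + 1) * n * 2 ^ k := by nlinarith
    exact lt_of_mul_lt_mul_right this hkpos.le
  have h2' : j + 1 ≤ (j' + 1) * n := by
    have : (j : ℤ) < (j' + 1) * n := by exact_mod_cast h2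
    omega
  intro y hy
  obtain ⟨hy1, hy2⟩ := hy
  constructor
  · rw [hpow]
    have : ((j' * n : ℤ) : ℝ) * 2 ^ k ≤ (j : ℝ) * 2 ^ k := by
      have hc : ((j' * n : ℤ) : ℝ) ≤ (j : ℝ) := by exact_mod_cast h1'
      push_cast at hc ⊢
      nlinarith
    push_cast at this
    linarith
  · rw [hpow]
    have : ((j : ℝ) + 1) * 2 ^ k ≤ (((j' + 1) * n : ℤ) : ℝ) * 2 ^ k := by
      have hc : ((j : ℝ) + 1) ≤ (((j' + 1) * n : ℤ) : ℝ) := by exact_mod_cast h2'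
      push_cast at hc ⊢
      nlinarith
    push_cast at this
    linarith

lemma haar_const_on (j e j' e' : ℤ) (he : e < e')
    (hne : (dyadicI j e ∩ dyadicI j' e').Nonempty) :
    ∃ s : ℝ, (s = 1 ∨ s = -1) ∧ ∀ x ∈ dyadicI j e, haar j' e' x = s := by
  obtain ⟨x₀, hx₀I, hx₀J⟩ := hne
  rcases (left_union_right j' e' ▸ hx₀J : x₀ ∈ dyadicLeft j' e' ∪ dyadicRight j' e') with h | h
  · refine ⟨-1, Or.inr rfl, fun x hx => haar_of_mem_left ?_⟩
    have hsub : dyadicI j e ⊆ dyadicI (2*j') (e'-1) :=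
      dyadic_nested (by omega) ⟨x₀, hx₀I, dyadicLeft_eq j' e' ▸ h⟩
    rw [dyadicLeft_eq]; exact hsub hx
  · refine ⟨1, Or.inl rfl, fun x hx => haar_of_mem_right ?_⟩
    have hsub : dyadicI j e ⊆ dyadicI (2*j'+1) (e'-1) :=
      dyadic_nested (by omega) ⟨x₀, hx₀I, dyadicRight_eq j' e' ▸ h⟩
    rw [dyadicRight_eq]; exact hsub hx

lemma one_dim {kk : ℕ} (j e : Fin kk → ℤ)
    (hinj : Function.Injective e)
    (hne : (⋂ i, dyadicI (j i) (e i)).Nonempty) (m : Fin kk) (hm : ∀ i, e m ≤ e i) :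
    ∃ ε : ℝ, (ε = 1 ∨ ε = -1) ∧
      ∀ x, ∏ i, haar (j i) (e i) x = ε * haar (j m) (e m) x := by
  obtain ⟨x₀, hx₀⟩ := hne
  simp only [Set.mem_iInter] at hx₀
  have key : ∀ i : Fin kk, ∃ s : ℝ, (s = 1 ∨ s = -1) ∧
      (i ≠ m → ∀ x ∈ dyadicI (j m) (e m), haar (j i) (e i) x = s) := by
    intro i
    by_cases hi : i = m
    · exact ⟨1, Or.inl rfl, fun h => absurd hi h⟩
    · have hlt : e m < e i := lt_of_le_of_ne (hm i) (fun h => hi (hinj h.symm))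
      obtain ⟨s, hs, hsx⟩ := haar_const_on _ _ _ _ hlt ⟨x₀, hx₀ m, hx₀ i⟩
      exact ⟨s, hs, fun _ => hsx⟩
  choose s hs hsx using key
  refine ⟨∏ i ∈ Finset.univ.erase m, s i, ?_, ?_⟩
  · exact Finset.prod_induction s (fun a => a = 1 ∨ a = -1)
      (by rintro a b (rfl|rfl) (rfl|rfl) <;> norm_num) (Or.inl rfl) (fun i _ => hs i)
  · intro x
    rw [← Finset.mul_prod_erase Finset.univ _ (Finset.mem_univ m)]
    by_cases hx : x ∈ dyadicI (j m) (e m)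
    · rw [Finset.prod_congr rfl (fun i hi => hsx i (Finset.ne_of_mem_erase hi) x hx)]
      ring
    · rw [haar_eq_zero hx]; ring

/-- If `R₁, …, R_k` are dyadic rectangles in dimension `d` whose side lengths in each
coordinate are pairwise distinct, and the intersection `S = ⋂ R_i` is nonempty (where
in each coordinate `t` the index `m t` gives the shortest side, so `S` has sides
`R_{m t, t}`), then there is a sign `ε ∈ {±1}` with `∏ h_{R_i} = ε h_S`. -/
theorem stmt3 (d kk : ℕ) (hd : 0 < d) (hkk : 0 < kk)
    (j e : Fin kk → Fin d → ℤ)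
    (hdist : ∀ t : Fin d, Function.Injective fun i : Fin kk => e i t)
    (hS : (⋂ i, Set.univ.pi fun t => dyadicI (j i t) (e i t)).Nonempty)
    (m : Fin d → Fin kk) (hm : ∀ t i, e (m t) t ≤ e i t) :
    ∃ ε : ℝ, (ε = 1 ∨ ε = -1) ∧
      ∀ x : Fin d → ℝ,
        (∏ i, ∏ t, haar (j i t) (e i t) (x t))
          = ε * ∏ t, haar (j (m t) t) (e (m t) t) (x t) := by
  obtain ⟨x₀, hx₀⟩ := hS
  simp only [Set.mem_iInter, Set.mem_pi, Set.mem_univ, forall_true_left] at hx₀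
  have key : ∀ t : Fin d, ∃ ε : ℝ, (ε = 1 ∨ ε = -1) ∧
      ∀ y : ℝ, ∏ i, haar (j i t) (e i t) y = ε * haar (j (m t) t) (e (m t) t) y := by
    intro t
    exact one_dim (fun i => j i t) (fun i => e i t) (hdist t)
      ⟨x₀ t, Set.mem_iInter.mpr fun i => hx₀ i t⟩ (m t) (fun i => hm t i)
  choose ε hε hεx using key
  refine ⟨∏ t, ε t, ?_, ?_⟩
  · exact Finset.prod_induction ε (fun a => a = 1 ∨ a = -1)
      (by rintro a b (rfl|rfl) (rfl|rfl) <;> norm_num) (Or.inl rfl) (fun t _ => hε t)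
  · intro x
    rw [Finset.prod_comm]
    calc ∏ t, ∏ i, haar (j i t) (e i t) (x t)
        = ∏ t, ε t * haar (j (m t) t) (e (m t) t) (x t) :=
          Finset.prod_congr rfl (fun t _ => hεx t (x t))
      _ = _ := Finset.prod_mul_distrib
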